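/- Let μ be a Borel probability measure on E with compact support A satisfying the small-ball assumption with constants c, α, r₀, and let u be its heat evolution. Then for every x ∈ E and every t with 0 < t ≤ r₀², u(x,t) ≥ c·t^{α/2}·(4πt)^{−d/2}·exp(−(d_A(x)+√t)²/(4t)). -/

import Mathlib

open MeasureTheory Metric Filter Topology

noncomputable def heatKernel (d : ℕ) (t : ℝ) (z : EuclideanSpace ℝ (Fin d)) : ℝ :=
  (4 * Real.pi * t) ^ (-(d : ℝ) / 2) * Real.exp (-‖z‖ ^ 2 / (4 * t))

noncomputable def heatEvolution {d : ℕ} (μ : Measure (EuclideanSpace ℝ (Fin d)))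
    (x : EuclideanSpace ℝ (Fin d)) (t : ℝ) : ℝ :=
  ∫ y, heatKernel d t (x - y) ∂μ

def msupport {E : Type*} [TopologicalSpace E] [MeasurableSpace E] (μ : Measure E) : Set E :=
  {x | ∀ U ∈ nhds x, 0 < μ U}

def SmallBall {d : ℕ} (μ : Measure (EuclideanSpace ℝ (Fin d))) (c α r₀ : ℝ) : Prop :=
  ∀ x ∈ msupport μ, ∀ r : ℝ, 0 < r → r ≤ r₀ →
    ENNReal.ofReal (c * r ^ α) ≤ μ (Metric.closedBall x r)

lemma msupport_nonempty {d : ℕ} (μ : Measure (EuclideanSpace ℝ (Fin d)))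
    [IsProbabilityMeasure μ] : (msupport μ).Nonempty := by
  by_contra h
  rw [Set.not_nonempty_iff_eq_empty] at h
  have h0 : μ Set.univ = 0 := by
    apply measure_null_of_locally_null
    intro x _
    have hx : x ∉ msupport μ := by rw [h]; exact Set.notMem_empty x
    simp only [msupport, Set.mem_setOf_eq, not_forall] at hx
    obtain ⟨U, hU, hU0⟩ := hx
    exact ⟨U, by rwa [nhdsWithin_univ], by simpa using hU0⟩
  simp [measure_univ] at h0

theorem gaussian_lower_bound_heatEvolution
    (d : ℕ) (hd : 1 ≤ d)
    (μ : Measure (EuclideanSpace ℝ (Fin d))) [IsProbabilityMeasure μ]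
    (A : Set (EuclideanSpace ℝ (Fin d))) (hA : A = msupport μ) (hAcpt : IsCompact A)
    (c α r₀ : ℝ) (hc : 0 < c) (hα : 0 ≤ α) (hr₀ : 0 < r₀)
    (hSB : SmallBall μ c α r₀)
    (x : EuclideanSpace ℝ (Fin d)) (t : ℝ) (ht : 0 < t) (ht' : t ≤ r₀ ^ 2) :
    c * t ^ (α / 2) * ((4 * Real.pi * t) ^ (-(d : ℝ) / 2) *
        Real.exp (-(Metric.infDist x A + Real.sqrt t) ^ 2 / (4 * t)))
      ≤ heatEvolution μ x t := by
  have hAne : A.Nonempty := hA ▸ msupport_nonempty μ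
  obtain ⟨a, haA, ha⟩ := hAcpt.exists_infDist_eq_dist hAne x
  set s := Metric.closedBall a (Real.sqrt t)
  have hst : (0:ℝ) < Real.sqrt t := Real.sqrt_pos.2 ht
  have hstr : Real.sqrt t ≤ r₀ := by
    rw [show r₀ = Real.sqrt (r₀ ^ 2) from (Real.sqrt_sq hr₀.le).symm]
    exact Real.sqrt_le_sqrt ht'
  have hμs : ENNReal.ofReal (c * t ^ (α / 2)) ≤ μ s := by
    have := hSB a (hA ▸ haA) (Real.sqrt t) hst hstr
    rwa [show Real.sqrt t ^ α = t ^ (α / 2) by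
      rw [Real.sqrt_eq_rpow, ← Real.rpow_mul ht.le, show (1:ℝ)/2 * α = α/2 by ring]] at this
  set K : ℝ := (4 * Real.pi * t) ^ (-(d : ℝ) / 2) *
      Real.exp (-(Metric.infDist x A + Real.sqrt t) ^ 2 / (4 * t))
  have hKpos : 0 < K :=
    mul_pos (Real.rpow_pos_of_pos (by positivity) _) (Real.exp_pos _)
  -- pointwise bound on s
  have hpt : ∀ y ∈ s, K ≤ heatKernel d t (x - y) := by
    intro y hy
    unfold heatKernel
    apply mul_le_mul_of_nonneg_left _ (Real.rpow_pos_of_pos (by positivity) _).le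
    apply Real.exp_le_exp.2
    rw [div_le_div_iff_of_pos_right (by positivity), neg_le_neg_iff]
    have hxy : ‖x - y‖ ≤ Metric.infDist x A + Real.sqrt t := by
      calc ‖x - y‖ ≤ ‖x - a‖ + ‖a - y‖ := norm_sub_le_norm_sub_add_norm_sub x a y
        _ ≤ Metric.infDist x A + Real.sqrt t := by
            rw [ha]
            exact add_le_add (le_of_eq (dist_eq_norm x a).symm)
              (by rw [← dist_eq_norm]; exact (mem_closedBall'.1 hy))
    exact pow_le_pow_left₀ (norm_nonneg _) hxy 2
  -- continuity and integrability of the kernel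
  have hcont : Continuous (fun y => heatKernel d t (x - y)) := by
    unfold heatKernel
    exact continuous_const.mul (Real.continuous_exp.comp
      (((continuous_const.sub continuous_id).norm.pow 2).neg.div_const _))
  have hnonneg : ∀ y, 0 ≤ heatKernel d t (x - y) := fun y =>
    mul_nonneg (Real.rpow_pos_of_pos (by positivity) _).le (Real.exp_pos _).le
  have hbdd : ∀ y, ‖heatKernel d t (x - y)‖ ≤ (4 * Real.pi * t) ^ (-(d : ℝ) / 2) := by
    intro y
    rw [Real.norm_of_nonneg (hnonneg y)]
    unfold heatKernel
    calc (4 * Real.pi * t) ^ (-(d : ℝ) / 2) * Real.exp (-‖x - y‖ ^ 2 / (4 * t))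
        ≤ (4 * Real.pi * t) ^ (-(d : ℝ) / 2) * 1 := by
          apply mul_le_mul_of_nonneg_left _ (Real.rpow_pos_of_pos (by positivity) _).le
          rw [Real.exp_le_one_iff]
          exact div_nonpos_of_nonpos_of_nonneg (neg_nonpos.2 (by positivity)) (by positivity)
      _ = _ := mul_one _
  have hint : Integrable (fun y => heatKernel d t (x - y)) μ := by
    refine ⟨hcont.aestronglyMeasurable, ?_⟩
    exact HasFiniteIntegral.of_bounded (C := (4 * Real.pi * t) ^ (-(d : ℝ) / 2))
      (Filter.Eventually.of_forall hbdd)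
  have hms : MeasurableSet s := measurableSet_closedBall
  have step1 : ∫ y in s, heatKernel d t (x - y) ∂μ ≤ heatEvolution μ x t :=
    setIntegral_le_integral hint (Filter.Eventually.of_forall hnonneg)
  have step2 : K * (μ s).toReal ≤ ∫ y in s, heatKernel d t (x - y) ∂μ := by
    have := setIntegral_mono_on (integrableOn_const (measure_lt_top μ s).ne)
      hint.integrableOn hms hpt
    simpa [setIntegral_const, smul_eq_mul, mul_comm, Measure.real] using this
  have hμs' : c * t ^ (α / 2) ≤ (μ s).toReal := by
    have h1 : μ s ≠ ⊤ := (measure_lt_top μ s).ne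
    have := ENNReal.toReal_mono h1 hμs
    rwa [ENNReal.toReal_ofReal (by positivity)] at this
  calc c * t ^ (α / 2) * K ≤ (μ s).toReal * K :=
        mul_le_mul_of_nonneg_right hμs' hKpos.le
    _ = K * (μ s).toReal := mul_comm _ _
    _ ≤ _ := step2.trans step1
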